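/- arXiv:2310.09274 — 2 statements merged into one kernel-verified Lean document; each statement's English description precedes it below -/
import Mathlib

section
/- Let A be a totally unimodular N×n real matrix of rank n with N ≥ n, and let α_1,…,α_N be the linear forms on ℝ^n given by its rows. Then every maximal linearly independent subset of {α_1,…,α_N} generates over ℤ the same free abelian subgroup of (ℝ^n)* of rank n. -/
/-- The linear form on `ℝⁿ` given by the `k`-th row of the matrix `A`. -/
noncomputable def rowForm {N n : ℕ} (A : Matrix (Fin N) (Fin n) ℝ) (k : Fin N) :
    Module.Dual ℝ (Fin n → ℝ) :=
  ∑ i : Fin n, A k i • LinearMap.proj i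

/-- `S` is a maximal linearly independent subset of the rows (as linear forms). -/
def MaxLinIndepRows {N n : ℕ} (A : Matrix (Fin N) (Fin n) ℝ) (S : Set (Fin N)) : Prop :=
  LinearIndependent ℝ (fun i : S => rowForm A i) ∧
    ∀ T : Set (Fin N), S ⊆ T → LinearIndependent ℝ (fun i : T => rowForm A i) → T = S

namespace StmtAux

open Matrix Module Submodule Set

/-- The standard identification of `ℝⁿ` with its dual, as a linear map. -/
noncomputable def eMap (n : ℕ) : (Fin n → ℝ) →ₗ[ℝ] Module.Dual ℝ (Fin n → ℝ) :=
  ∑ i : Fin n, (LinearMap.proj i : (Fin n → ℝ) →ₗ[ℝ] ℝ).smulRight (LinearMap.proj i)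

lemma eMap_apply {n : ℕ} (v : Fin n → ℝ) :
    eMap n v = ∑ i : Fin n, v i • (LinearMap.proj i : (Fin n → ℝ) →ₗ[ℝ] ℝ) := by
  simp [eMap]

lemma rowForm_eq {N n : ℕ} (A : Matrix (Fin N) (Fin n) ℝ) (k : Fin N) :
    rowForm A k = eMap n (A k) := by
  rw [rowForm, eMap_apply]

lemma eMap_single {n : ℕ} (v : Fin n → ℝ) (j : Fin n) :
    eMap n v (Pi.single j 1) = v j := by
  simp [eMap_apply, Pi.single_apply, Finset.sum_ite_eq']

lemma eMap_injective (n : ℕ) : Function.Injective (eMap n) := by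
  intro v w h
  funext j
  have := congrArg (fun φ => φ (Pi.single j (1 : ℝ))) h
  simpa [eMap_single] using this

lemma span_rows_top {N n : ℕ} (A : Matrix (Fin N) (Fin n) ℝ) (hrank : A.rank = n) :
    Submodule.span ℝ (Set.range (fun k : Fin N => A k)) = ⊤ := by
  have h1 : LinearMap.range Aᵀ.mulVecLin = Submodule.span ℝ (Set.range (fun k : Fin N => A k)) := by
    rw [Matrix.range_mulVecLin]; rfl
  apply Submodule.eq_top_of_finrank_eq
  rw [← h1]
  have : Aᵀ.rank = n := by rw [Matrix.rank_transpose, hrank]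
  simpa [Matrix.rank] using this.trans (Module.finrank_fin_fun ℝ).symm


lemma maximal_row_mem {N n : ℕ} (A : Matrix (Fin N) (Fin n) ℝ) {S : Set (Fin N)}
    (hS : MaxLinIndepRows A S) (j : Fin N) :
    rowForm A j ∈ Submodule.span ℝ (rowForm A '' S) := by
  by_contra hj
  have hjS : j ∉ S := fun h => hj (Submodule.subset_span ⟨j, h, rfl⟩)
  have hins : LinearIndependent ℝ (fun i : (insert j S : Set (Fin N)) => rowForm A i) :=
    (linearIndepOn_insert hjS).mpr ⟨hS.1, hj⟩
  have := hS.2 (insert j S) (Set.subset_insert _ _) hins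
  exact hjS (this ▸ Set.mem_insert j S)

lemma maximal_rows_span {N n : ℕ} (A : Matrix (Fin N) (Fin n) ℝ) (hrank : A.rank = n)
    {S : Set (Fin N)} (hS : MaxLinIndepRows A S) :
    Submodule.span ℝ ((fun k : Fin N => A k) '' S) = ⊤ := by
  have key : ∀ j : Fin N, A j ∈ Submodule.span ℝ ((fun k : Fin N => A k) '' S) := by
    intro j
    have h1 := maximal_row_mem A hS j
    have him : rowForm A '' S = eMap n '' ((fun k : Fin N => A k) '' S) := by
      rw [Set.image_image]
      exact Set.image_congr fun k _ => rowForm_eq A k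
    rw [him, ← Submodule.map_span, rowForm_eq] at h1
    obtain ⟨y, hy, hyE⟩ := Submodule.mem_map.mp h1
    rwa [← eMap_injective n hyE]
  rw [eq_top_iff, ← span_rows_top A hrank]
  exact Submodule.span_le.mpr (Set.range_subset_iff.mpr key)

lemma maximal_rows_li {N n : ℕ} (A : Matrix (Fin N) (Fin n) ℝ)
    {S : Set (Fin N)} (hS : MaxLinIndepRows A S) :
    LinearIndependent ℝ (fun i : S => A (i : Fin N)) := by
  have : (fun i : S => rowForm A (i : Fin N)) = eMap n ∘ (fun i : S => A (i : Fin N)) := by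
    funext i; exact rowForm_eq A i
  exact LinearIndependent.of_comp (eMap n) (this ▸ hS.1)

lemma maximal_card {N n : ℕ} (A : Matrix (Fin N) (Fin n) ℝ) (hrank : A.rank = n)
    {S : Set (Fin N)} (hS : MaxLinIndepRows A S) [Fintype S] :
    Fintype.card S = n := by
  have hsp : ⊤ ≤ Submodule.span ℝ (Set.range (fun i : S => A (i : Fin N))) := by
    have := maximal_rows_span A hrank hS
    rw [Set.image_eq_range] at this
    exact this.ge
  let b : Basis S ℝ (Fin n → ℝ) := Module.Basis.mk (maximal_rows_li A hS) hsp
  have := Module.finrank_eq_card_basis b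
  rw [Module.finrank_fin_fun ℝ] at this
  exact this.symm


lemma mem_int_span {N n : ℕ} (A : Matrix (Fin N) (Fin n) ℝ) (hTU : A.IsTotallyUnimodular)
    (S : Set (Fin N)) [Fintype S] (g : Fin n ≃ S)
    (hli : LinearIndependent ℝ (fun i : S => A (i : Fin N))) (j : Fin N) :
    rowForm A j ∈ Submodule.span ℤ (rowForm A '' S) := by
  classical
  set B : Matrix (Fin n) (Fin n) ℝ := A.submatrix (fun i => ((g i : S) : Fin N)) id with hBdef
  have hBrow : ∀ i, B i = A ((g i : S) : Fin N) := fun i => rfl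
  have hB : LinearIndependent ℝ (fun i => B i) := by
    have := hli.comp g g.injective
    exact this
  have hBu : IsUnit B := Matrix.linearIndependent_rows_iff_isUnit.mp hB
  have hd0 : B.det ≠ 0 := by
    have := Matrix.isUnit_iff_isUnit_det B |>.mp hBu
    exact this.ne_zero
  have hdTU : B.det ∈ Set.range SignType.cast :=
    (Matrix.isTotallyUnimodular_iff A).mp hTU n _ _
  have hdd : B.det * B.det = 1 := by
    obtain ⟨s, hs⟩ := hdTU
    cases s with
    | zero => exact absurd hs.symm (by simpa using hd0)
    | pos => rw [← hs]; norm_num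
    | neg => rw [← hs]; norm_num
  set c : Fin n → ℝ := B.det • Bᵀ.cramer (A j) with hcdef
  have hc : Bᵀ *ᵥ c = A j := by
    rw [hcdef, Matrix.mulVec_smul, Matrix.mulVec_cramer, Matrix.det_transpose, smul_smul, hdd,
      one_smul]
  have hcz : ∀ i : Fin n, ∃ z : ℤ, c i = (z : ℝ) := by
    intro i
    have hupd : Bᵀ.updateCol i (A j) =
        Aᵀ.submatrix id (fun l => if l = i then j else ((g l : S) : Fin N)) := by
      ext k l
      rw [Matrix.updateCol_apply]
      by_cases h : l = i <;> simp [h, hBdef]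
    have h2 : (Bᵀ.updateCol i (A j)).det ∈ Set.range SignType.cast := by
      rw [hupd]
      exact (Matrix.isTotallyUnimodular_iff Aᵀ).mp hTU.transpose n _ _
    obtain ⟨s1, hs1⟩ := hdTU
    obtain ⟨s2, hs2⟩ := h2
    refine ⟨(s1 : ℤ) * (s2 : ℤ), ?_⟩
    have : c i = B.det * (Bᵀ.updateCol i (A j)).det := by
      simp [hcdef, Matrix.cramer_apply]
    rw [this, ← hs1, ← hs2]
    cases s1 <;> cases s2 <;> norm_num
  have hvec : A j = ∑ i : Fin n, c i • B i := by
    rw [← hc]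
    funext l
    rw [Matrix.mulVec, Finset.sum_apply]
    simp [dotProduct, mul_comm]
  have hform : rowForm A j = ∑ i : Fin n, c i • rowForm A ((g i : S) : Fin N) := by
    rw [rowForm_eq, hvec, map_sum]
    congr 1
    funext i
    rw [_root_.map_smul, hBrow, ← rowForm_eq]
  rw [hform]
  refine Submodule.sum_mem _ fun i _ => ?_
  obtain ⟨z, hz⟩ := hcz i
  rw [hz, Int.cast_smul_eq_zsmul ℝ z (rowForm A ((g i : S) : Fin N))]
  exact Submodule.smul_mem _ z (Submodule.subset_span ⟨(g i : S), (g i).2, rfl⟩)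

end StmtAux

/-- Every maximal linearly independent subset of the rows of a totally unimodular matrix of
full rank generates the same free abelian group of rank `n` over `ℤ`. -/
theorem stmt0 {N n : ℕ} (hNn : n ≤ N) (A : Matrix (Fin N) (Fin n) ℝ)
    (hTU : A.IsTotallyUnimodular) (hrank : A.rank = n) :
    ∃ M : Submodule ℤ (Module.Dual ℝ (Fin n → ℝ)),
      (∀ S : Set (Fin N), MaxLinIndepRows A S →
        Submodule.span ℤ (rowForm A '' S) = M) ∧
      Module.Free ℤ M ∧ Module.finrank ℤ M = n := by
  classical
  obtain ⟨S₀, hli₀, hmax₀'⟩ := exists_maximal_linearIndepOn' ℝ (rowForm A)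
  have hS₀ : MaxLinIndepRows A S₀ := ⟨hli₀, fun T hsub hT => (hmax₀' T hsub hT).symm⟩
  haveI : Fintype S₀ := (Set.toFinite S₀).fintype
  have key : ∀ S : Set (Fin N), MaxLinIndepRows A S →
      Submodule.span ℤ (rowForm A '' S) = Submodule.span ℤ (Set.range (rowForm A)) := by
    intro S hS
    haveI : Fintype S := (Set.toFinite S).fintype
    refine le_antisymm (Submodule.span_mono (Set.image_subset_range _ _)) ?_
    rw [Submodule.span_le]
    rintro _ ⟨j, rfl⟩
    have hcard := StmtAux.maximal_card A hrank hS
    have g : Fin n ≃ S := (Fintype.equivFinOfCardEq hcard).symm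
    exact StmtAux.mem_int_span A hTU S g (StmtAux.maximal_rows_li A hS) j
  have hz : LinearIndependent ℤ (fun i : S₀ => rowForm A (i : Fin N)) := by
    refine LinearIndependent.restrict_scalars (li := hli₀) ?_
    intro a b h
    simpa using h
  have him : Set.range (fun i : S₀ => rowForm A (i : Fin N)) = rowForm A '' S₀ :=
    (Set.image_eq_range _ _).symm
  let b : Module.Basis S₀ ℤ (Submodule.span ℤ (Set.range (fun i : S₀ => rowForm A (i : Fin N)))) :=
    Module.Basis.span hz
  have hcard₀ := StmtAux.maximal_card A hrank hS₀
  refine ⟨Submodule.span ℤ (rowForm A '' S₀), fun S hS => (key S hS).trans (key S₀ hS₀).symm,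
    ?_, ?_⟩
  · rw [← him]
    exact Module.Free.of_basis b
  · rw [← him]
    rw [Module.finrank_eq_card_basis b, hcard₀]
end

section
/- If an N×n integer matrix A of full rank n has the property that A·C^{-1} is an integer matrix for every invertible n×n submatrix C of A formed from n of its rows, and one such submatrix is the identity, then A is totally unimodular. -/
open Matrix

lemma det_int_aux {m : ℕ} (M : Matrix (Fin m) (Fin m) ℝ)
    (h : ∀ p q, ∃ z : ℤ, M p q = z) : ∃ z : ℤ, M.det = z := by
  choose B hB using h
  have hM : M = (Int.castRingHom ℝ).mapMatrix (Matrix.of B) := by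
    ext p q; simp [hB]
  exact ⟨(Matrix.of B).det, by rw [hM, ← RingHom.map_det]; rfl⟩

lemma key_aux {N n : ℕ} (A : Matrix (Fin N) (Fin n) ℝ)
    (hint : ∀ p q, ∃ z : ℤ, A p q = z)
    (hdiv : ∀ r : Fin n → Fin N, Function.Injective r →
      IsUnit (A.submatrix r id) →
      ∀ p q, ∃ z : ℤ, (A * (A.submatrix r id)⁻¹) p q = z)
    (r₀ : Fin n → Fin N) (hr₀ : A.submatrix r₀ id = 1)
    (r : Fin n → Fin N) (hr : Function.Injective r)
    (hC : IsUnit (A.submatrix r id)) :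
    (A.submatrix r id).det = 1 ∨ (A.submatrix r id).det = -1 := by
  set C := A.submatrix r id with hCdef
  have hCinv : ∀ p q, ∃ z : ℤ, C⁻¹ p q = z := by
    intro p q
    obtain ⟨z, hz⟩ := hdiv r hr hC (r₀ p) q
    refine ⟨z, ?_⟩
    rw [← hz, Matrix.mul_apply]
    have : ∀ j, A (r₀ p) j = (1 : Matrix (Fin n) (Fin n) ℝ) p j := by
      intro j
      have := congrFun (congrFun hr₀ p) j
      simpa using this
    simp_rw [this]
    rw [Finset.sum_eq_single p]
    · simp [hCdef]
    · intro b _ hb; simp [Matrix.one_apply_ne (Ne.symm hb)]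
    · simp
  obtain ⟨z, hz⟩ := det_int_aux C (fun p q => hint (r p) q)
  obtain ⟨w, hw⟩ := det_int_aux C⁻¹ hCinv
  have hdet : IsUnit C.det := (Matrix.isUnit_iff_isUnit_det C).mp hC
  have hmul : C.det * C⁻¹.det = 1 := by
    rw [← Matrix.det_mul, Matrix.mul_nonsing_inv C hdet, Matrix.det_one]
  rw [hz, hw] at hmul
  have : z * w = 1 := by exact_mod_cast hmul
  rcases Int.eq_one_or_neg_one_of_mul_eq_one this with h | h
  · left; rw [hz, h]; norm_num
  · right; rw [hz, h]; norm_num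

/-- If an integer `N×n` matrix `A` of full rank `n` is such that `A · C⁻¹` is an integer
matrix for every invertible `n×n` submatrix `C` formed from `n` of its rows, and one such
submatrix is the identity, then `A` is totally unimodular. -/
theorem stmt2 {N n : ℕ} (A : Matrix (Fin N) (Fin n) ℝ)
    (hint : ∀ p q, ∃ z : ℤ, A p q = z)
    (hrank : A.rank = n)
    (hdiv : ∀ r : Fin n → Fin N, Function.Injective r →
      IsUnit (A.submatrix r id) →
      ∀ p q, ∃ z : ℤ, (A * (A.submatrix r id)⁻¹) p q = z)
    (hid : ∃ r : Fin n → Fin N, Function.Injective r ∧ A.submatrix r id = 1) :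
    A.IsTotallyUnimodular := by
  classical
  obtain ⟨r₀, hr₀inj, hr₀⟩ := hid
  intro k f g hf hg
  have hone : ∀ p j, A (r₀ p) j = (1 : Matrix (Fin n) (Fin n) ℝ) p j := by
    intro p j
    have := congrFun (congrFun hr₀ p) j
    simpa using this
  let e : (Fin k ⊕ ((Set.range g)ᶜ : Set (Fin n))) ≃ Fin n :=
    ((Equiv.ofInjective g hg).sumCongr (Equiv.refl _)).trans (Equiv.Set.sumCompl (Set.range g))
  have he1 : ∀ i, e (Sum.inl i) = g i := fun i => rfl
  have he2 : ∀ x, e (Sum.inr x) = x.val := fun x => rfl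
  set r : Fin n → Fin N := fun j => Sum.elim (fun i => f i) (fun x => r₀ x.val) (e.symm j)
    with hrdef
  set D := A.submatrix r id with hD
  have hre : ∀ s, r (e s) = Sum.elim (fun i => f i) (fun x => r₀ x.val) s := by
    intro s; rw [hrdef]; simp
  have hDe : ∀ s t, D.submatrix e e s t
      = A (Sum.elim (fun i => f i) (fun x => r₀ x.val) s) (e t) :=
    fun s t => congrFun (congrArg A (hre s)) (e t)
  have hblock : D.submatrix e e = Matrix.fromBlocks (A.submatrix f g)
      (A.submatrix f (fun x : ((Set.range g)ᶜ : Set (Fin n)) => x.val)) 0 1 := by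
    ext i j
    cases i with
    | inl i =>
      cases j with
      | inl j => rw [hDe, he1]; rfl
      | inr y => rw [hDe, he2]; rfl
    | inr x =>
      cases j with
      | inl j =>
        have hx : x.val ≠ g j := fun h => x.prop ⟨j, h.symm⟩
        rw [hDe, he1]
        simp only [Sum.elim_inr, hone, Matrix.fromBlocks_apply₂₁, Matrix.zero_apply]
        exact Matrix.one_apply_ne hx
      | inr y =>
        rw [hDe, he2]
        simp only [Sum.elim_inr, hone, Matrix.fromBlocks_apply₂₂]
        rw [Matrix.one_apply, Matrix.one_apply]
        simp [Subtype.ext_iff]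
  have hDB : D.det = (A.submatrix f g).det := by
    rw [← Matrix.det_submatrix_equiv_self e D, hblock,
      Matrix.det_fromBlocks_zero₂₁, Matrix.det_one, mul_one]
  by_cases hd : D.det = 0
  · exact ⟨0, by rw [← hDB, hd]; simp⟩
  · have hrinj : Function.Injective r := by
      intro a b hab
      by_contra hne
      apply hd
      apply Matrix.det_zero_of_row_eq hne
      ext j
      simp [hD, hab]
    have hU : IsUnit D := (Matrix.isUnit_iff_isUnit_det D).mpr (isUnit_iff_ne_zero.mpr hd)
    rcases key_aux A hint hdiv r₀ hr₀ r hrinj hU with h | h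
    · exact ⟨1, by rw [← hDB, hD, h]; simp⟩
    · exact ⟨-1, by rw [← hDB, hD, h]; simp⟩
end
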